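/- Kantorovich inequality: if A is a symmetric positive definite matrix with smallest eigenvalue λ₁ and largest eigenvalue λₙ, then for every nonzero vector g, (gᵀg)² / ((gᵀAg)(gᵀA⁻¹g)) ≥ 4λ₁λₙ / (λ₁ + λₙ)². -/

import Mathlib

open Matrix

/-- Kantorovich inequality: for a symmetric positive definite matrix whose
eigenvalues lie in [λ₁, λₙ] (expressed through Rayleigh-quotient bounds) and any
nonzero g, (gᵀg)² / ((gᵀAg)(gᵀA⁻¹g)) ≥ 4λ₁λₙ / (λ₁+λₙ)². -/
theorem kantorovich_inequality {n : ℕ}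
    (A : Matrix (Fin n) (Fin n) ℝ) (hA : A.PosDef)
    (lam1 lamn : ℝ) (hlam1 : 0 < lam1) (hle : lam1 ≤ lamn)
    (hR1 : ∀ v : Fin n → ℝ, lam1 * (v ⬝ᵥ v) ≤ v ⬝ᵥ (A *ᵥ v))
    (hRn : ∀ v : Fin n → ℝ, v ⬝ᵥ (A *ᵥ v) ≤ lamn * (v ⬝ᵥ v))
    (g : Fin n → ℝ) (hg : g ≠ 0) :
    4 * lam1 * lamn / (lam1 + lamn) ^ 2
      ≤ (g ⬝ᵥ g) ^ 2 / ((g ⬝ᵥ (A *ᵥ g)) * (g ⬝ᵥ (A⁻¹ *ᵥ g))) := by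
  have hlamn : 0 < lamn := lt_of_lt_of_le hlam1 hle
  have hT : Aᵀ = A := by
    have := hA.1
    simpa [Matrix.IsHermitian, Matrix.conjTranspose_eq_transpose_of_trivial] using this
  set u : Fin n → ℝ := A⁻¹ *ᵥ g with hu
  have hAu : A *ᵥ u = g := by
    rw [hu, Matrix.mulVec_mulVec,
      Matrix.mul_nonsing_inv _ (isUnit_iff_isUnit_det A |>.1 hA.isUnit), Matrix.one_mulVec]
  set a : ℝ := g ⬝ᵥ (A *ᵥ g) with ha
  set b : ℝ := g ⬝ᵥ g with hb
  set c : ℝ := g ⬝ᵥ u with hc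
  set d : ℝ := u ⬝ᵥ u with hd
  have hsymm : u ⬝ᵥ (A *ᵥ g) = b := by
    rw [Matrix.dotProduct_mulVec, ← hT, Matrix.vecMul_transpose, hAu]
  have hcu : u ⬝ᵥ g = c := by rw [hc, dotProduct_comm]
  -- parametric expansions
  have expand1 : ∀ t : ℝ, (g - t • u) ⬝ᵥ (A *ᵥ (g - t • u)) = a - 2*t*b + t^2*c := by
    intro t
    rw [Matrix.mulVec_sub, Matrix.mulVec_smul, hAu]
    simp only [sub_dotProduct, dotProduct_sub, smul_dotProduct, dotProduct_smul, smul_eq_mul]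
    rw [hsymm, hcu]
    ring
  have expand2 : ∀ t : ℝ, (g - t • u) ⬝ᵥ (g - t • u) = b - 2*t*c + t^2*d := by
    intro t
    simp only [sub_dotProduct, dotProduct_sub, smul_dotProduct, dotProduct_smul, smul_eq_mul]
    rw [hcu]
    ring
  have hX : lam1 * (b - 2*lamn*c + lamn^2*d) ≤ a - 2*lamn*b + lamn^2*c := by
    have := hR1 (g - lamn • u); rwa [expand1, expand2] at this
  have hY : a - 2*lam1*b + lam1^2*c ≤ lamn * (b - 2*lam1*c + lam1^2*d) := by
    have := hRn (g - lam1 • u); rwa [expand1, expand2] at this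
  -- the key trace inequality
  have hTkey : a + lam1 * lamn * c ≤ (lam1 + lamn) * b := by
    rcases eq_or_lt_of_le hle with heq | hlt
    · subst heq
      have h1 := hR1 g
      have h2 := hRn g
      have h3 : lam1 * (b - 2*(-1)*c + (-1:ℝ)^2*d) ≤ a - 2*(-1)*b + (-1:ℝ)^2*c := by
        have := hR1 (g - (-1:ℝ) • u); rwa [expand1, expand2] at this
      have h4 := hY
      rw [← ha, ← hb] at h1 h2
      nlinarith [hlam1]
    · have hkey : (lamn - lam1) * ((lam1 + lamn) * b - a - lam1 * lamn * c) ≥ 0 := by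
        nlinarith [mul_nonneg hlam1.le (sub_nonneg.2 hX), mul_nonneg hlamn.le (sub_nonneg.2 hY)]
      nlinarith [hkey, sub_pos.2 hlt]
  -- positivity
  have hapos : 0 < a := by
    have := hA.dotProduct_mulVec_pos hg
    simpa [ha] using this
  have hcpos : 0 < c := by
    have := hA.inv.dotProduct_mulVec_pos hg
    simpa [hc, hu] using this
  have hbpos : 0 < b := by
    have h1 := hR1 g
    rw [← ha, ← hb] at h1
    nlinarith [hapos, hR1 g, hRn g, hlamn]
  have hden : 0 < a * c := mul_pos hapos hcpos
  have hsum : 0 < (lam1 + lamn) ^ 2 := by positivity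
  rw [div_le_div_iff₀ hsum hden]
  have hsq : (a + lam1 * lamn * c)^2 ≤ ((lam1 + lamn) * b)^2 := by
    have h0 : 0 ≤ a + lam1 * lamn * c := by positivity
    exact pow_le_pow_left₀ h0 hTkey 2
  nlinarith [hsq, sq_nonneg (a - lam1 * lamn * c)]
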